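/- Let n ≥ 2, let λ be a nonzero complex number with α := λ^n ≠ 1, and let A, B : ℂ → M_n(ℂ) be maps analytic in a neighborhood of 0 such that: (i) for all t near 0, A(t)_{1,j} = 0 and A(t)_{i,1} = 0 for all 2 ≤ i, j ≤ n (A(t) is block diagonal); (ii) A(0) = λ^{−1}·diag(α, J_{n−1}); (iii) B(0) = λ^{−1} times the block matrix with (1,1)-entry α, first-row tail b = (b_1, …, b_{n−1}) with b_1 ≠ 0, lower-right block J_{n−1}, and zeros in the rest of the first column; (iv) the derivative at 0 of the entry function t ↦ B(t)_{n,1} is nonzero. Then there exists ε > 0 such that for all t with 0 < |t| < ε, the ℂ-subalgebra of M_n(ℂ) generated by A(t) and B(t) equals all of M_n(ℂ). -/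

import Mathlib

open Matrix

noncomputable section

/-- Generalized binomial coefficient C(m,k) for m : ℤ, as a complex number. -/
def gbinom (m : ℤ) (k : ℕ) : ℂ :=
  (∏ i ∈ Finset.range k, ((m : ℂ) - i)) / (Nat.factorial k)

/-- The n×n nilpotent Jordan matrix N. -/
def Nmat (n : ℕ) : Matrix (Fin n) (Fin n) ℂ :=
  Matrix.of fun i j => if (i : ℕ) + 1 = (j : ℕ) then 1 else 0

/-- The unipotent Jordan block J = I + N. -/
def Jmat (n : ℕ) : Matrix (Fin n) (Fin n) ℂ := 1 + Nmat n

lemma Jmat_blockTriangular (n : ℕ) : (Jmat n).BlockTriangular id := by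
  intro i j hij
  have hji : (j : ℕ) < (i : ℕ) := hij
  simp only [Jmat, Matrix.add_apply, Matrix.one_apply, Nmat, Matrix.of_apply]
  rw [if_neg (by intro h; subst h; exact lt_irrefl _ hji), if_neg (by omega)]
  simp

lemma Jmat_isUnit (n : ℕ) : IsUnit (Jmat n) := by
  rw [Matrix.isUnit_iff_isUnit_det,
    Matrix.det_of_upperTriangular (Jmat_blockTriangular n)]
  have : ∀ i : Fin n, Jmat n i i = 1 := by
    intro i
    simp [Jmat, Matrix.one_apply, Nmat]
  simp [this]

/-- Integer powers (positive and negative) of the unipotent Jordan block. -/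
def Jz (n : ℕ) (m : ℤ) : Matrix (Fin n) (Fin n) ℂ :=
  (((Jmat_isUnit n).unit ^ m : (Matrix (Fin n) (Fin n) ℂ)ˣ) : Matrix (Fin n) (Fin n) ℂ)

open Polynomial
lemma Nmat_pow_apply (m k : ℕ) (i j : Fin m) :
    (Nmat m ^ k) i j = if (i : ℕ) + k = (j : ℕ) then 1 else 0 := by
  induction k generalizing j with
  | zero => simp [Matrix.one_apply, Fin.ext_iff]
  | succ k ih =>
    rw [pow_succ, Matrix.mul_apply]
    by_cases h : (i : ℕ) + (k+1) = (j : ℕ)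
    · have hu : ((i : ℕ) + k) < m := by omega
      rw [Finset.sum_eq_single ⟨(i:ℕ)+k, hu⟩, if_pos h]
      · have h1 : (Nmat m ^ k) i ⟨(i:ℕ)+k, hu⟩ = 1 := by simp [ih]
        have h2 : (Nmat m) ⟨(i:ℕ)+k, hu⟩ j = 1 := by
          simp only [Nmat, Matrix.of_apply]
          rw [if_pos]; omega
        rw [h1, h2, one_mul]
      · intro u _ hu'
        rcases eq_or_ne ((i:ℕ) + k) (u:ℕ) with he | he
        · exfalso; exact hu' (by ext; simp [he.symm])
        · simp [ih, he]
      · simp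
    · rw [if_neg h]
      apply Finset.sum_eq_zero
      intro u _
      rcases eq_or_ne ((i:ℕ) + k) (u:ℕ) with he | he
      · have : ¬ ((u:ℕ) + 1 = (j:ℕ)) := by omega
        simp [Nmat, this]
      · simp [ih, he]

lemma Nmat_pow_eq_zero {m k : ℕ} (h : m ≤ k) : Nmat m ^ k = 0 := by
  ext i j
  rw [Nmat_pow_apply]
  have : ¬ ((i:ℕ) + k = (j:ℕ)) := by omega
  simp [this]

lemma Jmat_pow (m i : ℕ) :
    Jmat m ^ i = ∑ k ∈ Finset.range m, ((i.choose k : ℂ)) • Nmat m ^ k := by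
  rw [Jmat, add_comm (1 : Matrix (Fin m) (Fin m) ℂ)]
  rw [(Commute.one_right (Nmat m)).add_pow]
  simp only [one_pow, mul_one]
  have hterm : ∀ x : ℕ, Nmat m ^ x * (i.choose x : Matrix (Fin m) (Fin m) ℂ)
      = ((i.choose x : ℂ)) • Nmat m ^ x := by
    intro x
    rw [← (Nat.cast_commute (i.choose x) (Nmat m ^ x)).eq, ← nsmul_eq_mul,
      ← Nat.cast_smul_eq_nsmul ℂ]
  simp only [hterm]
  have h1 : ∑ k ∈ Finset.range (i+1), ((i.choose k : ℂ)) • Nmat m ^ k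
      = ∑ k ∈ Finset.range (max (i+1) m), ((i.choose k : ℂ)) • Nmat m ^ k := by
    apply Finset.sum_subset (Finset.range_subset_range.2 (le_max_left _ _))
    intro x _ hx
    rw [Nat.choose_eq_zero_of_lt (by simp at hx; omega), Nat.cast_zero, zero_smul]
  have h2 : ∑ k ∈ Finset.range m, ((i.choose k : ℂ)) • Nmat m ^ k
      = ∑ k ∈ Finset.range (max (i+1) m), ((i.choose k : ℂ)) • Nmat m ^ k := by
    apply Finset.sum_subset (Finset.range_subset_range.2 (le_max_right _ _))
    intro x _ hx
    rw [Nmat_pow_eq_zero (by simp at hx; omega), smul_zero]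
  rw [h1, h2]

lemma Nmat_pow_mulVec {m : ℕ} (k : ℕ) (d : Fin m → ℂ) (p : Fin m) :
    ((Nmat m ^ k) *ᵥ d) p = if h : (p : ℕ) + k < m then d ⟨(p:ℕ)+k, h⟩ else 0 := by
  unfold mulVec dotProduct
  split_ifs with h
  · rw [Finset.sum_eq_single ⟨(p:ℕ)+k, h⟩]
    · simp [Nmat_pow_apply]
    · intro u _ hu
      simp only [Nmat_pow_apply]
      rw [if_neg, zero_mul]
      intro hc; exact hu (by ext; simp [hc.symm])
    · simp
  · apply Finset.sum_eq_zero
    intro u _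
    simp only [Nmat_pow_apply]
    rw [if_neg (by omega), zero_mul]

lemma Nmat_vecMul {m : ℕ} (k : ℕ) (b : Fin m → ℂ) (q : Fin m) :
    (b ᵥ* (Nmat m ^ k)) q = if h : k ≤ (q : ℕ) then b ⟨(q:ℕ)-k, by omega⟩ else 0 := by
  unfold vecMul dotProduct
  split_ifs with h
  · rw [Finset.sum_eq_single ⟨(q:ℕ)-k, by omega⟩]
    · simp only [Nmat_pow_apply]
      rw [if_pos (by omega), mul_one]
    · intro u _ hu
      simp only [Nmat_pow_apply]
      rw [if_neg, mul_zero]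
      intro hc; exact hu (by ext; simp; omega)
    · simp
  · apply Finset.sum_eq_zero
    intro u _
    simp only [Nmat_pow_apply]
    rw [if_neg (by omega), mul_zero]

lemma det_hankel_col {m : ℕ} (hm : 0 < m) (d : Fin m → ℂ) (hd : d ⟨m-1, by omega⟩ ≠ 0) :
    (Matrix.of fun p k : Fin m => ((Nmat m ^ (k:ℕ)) *ᵥ d) p).det ≠ 0 := by
  set H : Matrix (Fin m) (Fin m) ℂ := Matrix.of fun p k : Fin m => ((Nmat m ^ (k:ℕ)) *ᵥ d) p with hH
  intro h0
  have hperm := Matrix.det_permute' (Fin.revPerm) H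
  have htri : (H.submatrix id Fin.revPerm).BlockTriangular id := by
    intro p q hpq
    have hq : ((Fin.revPerm q : Fin m) : ℕ) = m - 1 - (q : ℕ) := by
      simp [Fin.revPerm, Fin.rev]
      omega
    simp only [Matrix.submatrix_apply, id_eq, hH, Matrix.of_apply, Nmat_pow_mulVec]
    rw [dif_neg]
    rw [hq]
    have : (q : ℕ) < (p : ℕ) := hpq
    omega
  have hdet : (H.submatrix id Fin.revPerm).det = d ⟨m-1, by omega⟩ ^ m := by
    rw [Matrix.det_of_upperTriangular htri]
    have : ∀ p : Fin m, (H.submatrix id Fin.revPerm) p p = d ⟨m-1, by omega⟩ := by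
      intro p
      have hq : ((Fin.revPerm p : Fin m) : ℕ) = m - 1 - (p : ℕ) := by
        simp [Fin.revPerm, Fin.rev]; omega
      simp only [Matrix.submatrix_apply, id_eq, hH, Matrix.of_apply, Nmat_pow_mulVec]
      rw [dif_pos (by omega)]
      congr 1
      ext
      simp [hq]; omega
    rw [Finset.prod_congr rfl (fun p _ => this p)]
    simp
  rw [h0, mul_zero] at hperm
  rw [hperm] at hdet
  exact hd (pow_eq_zero_iff (by omega)|>.mp hdet.symm)

lemma det_krylov_col {m : ℕ} (hm : 0 < m) (d : Fin m → ℂ) (hd : d ⟨m-1, by omega⟩ ≠ 0) :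
    (Matrix.of fun p i : Fin m => ((Jmat m ^ (i:ℕ)) *ᵥ d) p).det ≠ 0 := by
  set H : Matrix (Fin m) (Fin m) ℂ := Matrix.of fun p k : Fin m => ((Nmat m ^ (k:ℕ)) *ᵥ d) p with hH
  set CT : Matrix (Fin m) (Fin m) ℂ := Matrix.of fun k i : Fin m => (((i:ℕ).choose (k:ℕ) : ℂ)) with hCT
  have hK : (Matrix.of fun p i : Fin m => ((Jmat m ^ (i:ℕ)) *ᵥ d) p) = H * CT := by
    ext p i
    rw [Matrix.mul_apply]
    simp only [Matrix.of_apply, Jmat_pow m (i:ℕ), hH, hCT]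
    have : ∀ u : Fin m, ((∑ k ∈ Finset.range m, (((i:ℕ).choose k : ℂ)) • Nmat m ^ k) *ᵥ d) u
        = ∑ k ∈ Finset.range m, (((i:ℕ).choose k : ℂ)) * ((Nmat m ^ k *ᵥ d) u) := by
      intro u
      unfold Matrix.mulVec dotProduct
      simp only [Matrix.sum_apply, Matrix.smul_apply, smul_eq_mul, Finset.sum_mul, Finset.mul_sum]
      rw [Finset.sum_comm]
      exact Finset.sum_congr rfl fun k _ => Finset.sum_congr rfl fun v _ => by ring
    rw [this p]
    rw [Finset.sum_bij' (fun k hk => (⟨k, Finset.mem_range.mp hk⟩ : Fin m)) (fun k _ => (k : ℕ)) ]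
    · simp
    · intro a ha; simp
    · intro a ha; simp
    · intro a ha; simp
    · intro a ha; exact mul_comm _ _
  rw [hK, Matrix.det_mul]
  have hCTdet : CT.det = 1 := by
    have htri : CT.BlockTriangular id := by
      intro k i hik
      have : (i : ℕ) < (k : ℕ) := hik
      simp only [hCT, Matrix.of_apply]
      rw [Nat.choose_eq_zero_of_lt this, Nat.cast_zero]
    rw [Matrix.det_of_upperTriangular htri]
    simp [hCT]
  rw [hCTdet, mul_one]
  exact det_hankel_col hm d hd

lemma det_krylov_row {m : ℕ} (hm : 0 < m) (b : Fin m → ℂ) (hb : b ⟨0, hm⟩ ≠ 0) :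
    (Matrix.of fun j q : Fin m => ((b ᵥ* (Jmat m ^ (j:ℕ)))) q).det ≠ 0 := by
  set H : Matrix (Fin m) (Fin m) ℂ := Matrix.of fun k q : Fin m => ((b ᵥ* (Nmat m ^ (k:ℕ)))) q with hH
  set C : Matrix (Fin m) (Fin m) ℂ := Matrix.of fun j k : Fin m => (((j:ℕ).choose (k:ℕ) : ℂ)) with hC
  have hK : (Matrix.of fun j q : Fin m => ((b ᵥ* (Jmat m ^ (j:ℕ)))) q) = C * H := by
    ext j q
    rw [Matrix.mul_apply]
    simp only [Matrix.of_apply, Jmat_pow m (j:ℕ), hH, hC]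
    have : ∀ u : Fin m, ((b ᵥ* (∑ k ∈ Finset.range m, (((j:ℕ).choose k : ℂ)) • Nmat m ^ k))) u
        = ∑ k ∈ Finset.range m, (((j:ℕ).choose k : ℂ)) * ((b ᵥ* (Nmat m ^ k)) u) := by
      intro u
      unfold Matrix.vecMul dotProduct
      simp only [Matrix.sum_apply, Matrix.smul_apply, smul_eq_mul, Finset.sum_mul, Finset.mul_sum]
      rw [Finset.sum_comm]
      apply Finset.sum_congr rfl
      intro k _
      apply Finset.sum_congr rfl
      intro u' _
      ring
    rw [this q]
    rw [Finset.sum_bij' (fun k hk => (⟨k, Finset.mem_range.mp hk⟩ : Fin m)) (fun k _ => (k : ℕ)) ]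
    · simp
    · intro a ha; simp
    · intro a ha; simp
    · intro a ha; simp
    · intro a ha; rfl
  rw [hK, Matrix.det_mul]
  have hCdet : C.det = 1 := by
    have htri : C.BlockTriangular OrderDual.toDual := by
      intro j k hjk
      have : (j : ℕ) < (k : ℕ) := hjk
      simp only [hC, Matrix.of_apply]
      rw [Nat.choose_eq_zero_of_lt this, Nat.cast_zero]
    rw [Matrix.det_of_lowerTriangular _ htri]
    simp [hC]
  rw [hCdet, one_mul]
  -- H upper triangular with diagonal b 0
  have htri : H.BlockTriangular id := by
    intro k q hqk
    have : (q : ℕ) < (k : ℕ) := hqk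
    simp only [hH, Matrix.of_apply, Nmat_vecMul]
    rw [dif_neg (by omega)]
  rw [Matrix.det_of_upperTriangular htri]
  apply Finset.prod_ne_zero_iff.mpr
  intro k _
  simp only [hH, Matrix.of_apply, Nmat_vecMul]
  rw [dif_pos (le_refl _)]
  simpa using hb

lemma fromBlocks_diag_pow {m : ℕ} (X : Matrix (Fin 1) (Fin 1) ℂ) (Y : Matrix (Fin m) (Fin m) ℂ)
    (k : ℕ) : (fromBlocks X 0 0 Y) ^ k = fromBlocks (X ^ k) 0 0 (Y ^ k) := by
  induction k with
  | zero => simp [Matrix.fromBlocks_one]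
  | succ k ih =>
    rw [pow_succ, pow_succ, pow_succ, ih, Matrix.fromBlocks_multiply]
    simp

lemma aeval_fromBlocks_diag {m : ℕ} (X : Matrix (Fin 1) (Fin 1) ℂ) (Y : Matrix (Fin m) (Fin m) ℂ)
    (p : Polynomial ℂ) :
    aeval (fromBlocks X 0 0 Y) p = fromBlocks (aeval X p) 0 0 (aeval Y p) := by
  induction p using Polynomial.induction_on' with
  | add p q hp hq =>
    rw [map_add, map_add, map_add, hp, hq, Matrix.fromBlocks_add]
    simp
  | monomial k c =>
    simp only [aeval_monomial, fromBlocks_diag_pow]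
    rw [← Algebra.smul_def, ← Algebra.smul_def, ← Algebra.smul_def, Matrix.fromBlocks_smul]
    simp

lemma core {m : ℕ} (hm : 0 < m) (A B : Matrix (Fin 1 ⊕ Fin m) (Fin 1 ⊕ Fin m) ℂ)
    (hA12 : ∀ j, A (Sum.inl 0) (Sum.inr j) = 0) (hA21 : ∀ i, A (Sum.inr i) (Sum.inl 0) = 0)
    (hd : Polynomial.eval (A (Sum.inl 0) (Sum.inl 0)) (A.toBlocks₂₂).charpoly ≠ 0)
    (hK : (Matrix.of fun p i : Fin m =>
      (((A.toBlocks₂₂) ^ (i:ℕ)) *ᵥ (fun q => B (Sum.inr q) (Sum.inl 0))) p).det ≠ 0)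
    (hL : (Matrix.of fun j q : Fin m =>
      (((fun k => B (Sum.inl 0) (Sum.inr k)) ᵥ* ((A.toBlocks₂₂) ^ (j:ℕ)))) q).det ≠ 0) :
    Algebra.adjoin ℂ {A, B} = ⊤ := by
  set S := Algebra.adjoin ℂ ({A, B} : Set (Matrix (Fin 1 ⊕ Fin m) (Fin 1 ⊕ Fin m) ℂ)) with hS
  have hAS : A ∈ S := Algebra.subset_adjoin (by simp)
  have hBS : B ∈ S := Algebra.subset_adjoin (by simp)
  set a := A (Sum.inl 0) (Sum.inl 0) with ha
  set A₂ := A.toBlocks₂₂ with hA₂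
  set c : Fin m → ℂ := fun q => B (Sum.inr q) (Sum.inl 0) with hc
  set bb : Fin m → ℂ := fun k => B (Sum.inl 0) (Sum.inr k) with hbb
  have hAblocks : A = fromBlocks (Matrix.of fun _ _ => a) 0 0 A₂ := by
    ext x y
    cases x with
    | inl i =>
      cases y with
      | inl j =>
        have hi : i = 0 := Subsingleton.elim _ _
        have hj : j = 0 := Subsingleton.elim _ _
        subst hi; subst hj
        simp [Matrix.fromBlocks, ha]
      | inr j =>
        have hi : i = 0 := Subsingleton.elim _ _
        subst hi
        simp [Matrix.fromBlocks, hA12 j]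
    | inr i =>
      cases y with
      | inl j =>
        have hj : j = 0 := Subsingleton.elim _ _
        subst hj
        simp [Matrix.fromBlocks, hA21 i]
      | inr j => simp [Matrix.fromBlocks, hA₂, Matrix.toBlocks₂₂]
  set χ := A₂.charpoly with hχ
  set P : Matrix (Fin 1 ⊕ Fin m) (Fin 1 ⊕ Fin m) ℂ := (Polynomial.eval a χ)⁻¹ • aeval A χ
    with hPdef
  have hPS : P ∈ S := by
    apply S.smul_mem
    exact Algebra.adjoin_mono (Set.singleton_subset_iff.2 (by simp))
      (Polynomial.aeval_mem_adjoin_singleton ℂ A)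
  have hP : P = fromBlocks 1 0 0 0 := by
    have h11 : (Matrix.of fun _ _ => a : Matrix (Fin 1) (Fin 1) ℂ) = algebraMap ℂ _ a := by
      ext i j
      have hi : i = 0 := Subsingleton.elim _ _
      have hj : j = 0 := Subsingleton.elim _ _
      subst hi; subst hj
      simp [Matrix.algebraMap_matrix_apply]
    rw [hPdef, hAblocks, aeval_fromBlocks_diag, Matrix.aeval_self_charpoly, h11,
      aeval_algebraMap_apply_eq_algebraMap_eval, Matrix.fromBlocks_smul]
    rw [Algebra.algebraMap_eq_smul_one, smul_smul, inv_mul_cancel₀ hd]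
    simp
  set B12 := B.toBlocks₁₂ with hB12
  set B21 := B.toBlocks₂₁ with hB21
  have h1P : (1 : Matrix (Fin 1 ⊕ Fin m) (Fin 1 ⊕ Fin m) ℂ) - P = fromBlocks 0 0 0 1 := by
    rw [hP, ← Matrix.fromBlocks_one]
    ext x y
    cases x <;> cases y <;> simp [Matrix.fromBlocks]
  set Y := (1 - P) * B * P with hYdef
  set X := P * B * (1 - P) with hXdef
  have hYS : Y ∈ S := S.mul_mem (S.mul_mem (S.sub_mem S.one_mem hPS) hBS) hPS
  have hXS : X ∈ S := S.mul_mem (S.mul_mem hPS hBS) (S.sub_mem S.one_mem hPS)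
  have hBblocks : B = fromBlocks (B.toBlocks₁₁) B12 B21 (B.toBlocks₂₂) :=
    (Matrix.fromBlocks_toBlocks B).symm
  have hY : Y = fromBlocks 0 0 B21 0 := by
    rw [hYdef, h1P, hP, hBblocks, Matrix.fromBlocks_multiply, Matrix.fromBlocks_multiply]
    simp
  have hX : X = fromBlocks 0 B12 0 0 := by
    rw [hXdef, h1P, hP, hBblocks, Matrix.fromBlocks_multiply, Matrix.fromBlocks_multiply]
    simp
  have hB21e : ∀ (q : Fin m) (w : Fin 1), B21 q w = c q := by
    intro q w
    have hw : w = 0 := Subsingleton.elim _ _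
    subst hw
    rfl
  have hB12e : ∀ (w : Fin 1) (k : Fin m), B12 w k = bb k := by
    intro w k
    have hw : w = 0 := Subsingleton.elim _ _
    subst hw
    rfl
  set K : Matrix (Fin m) (Fin m) ℂ := Matrix.of fun p i => ((A₂ ^ (i:ℕ)) *ᵥ c) p with hKdef
  set L : Matrix (Fin m) (Fin m) ℂ := Matrix.of fun j q => ((bb ᵥ* (A₂ ^ (j:ℕ)))) q with hLdef
  have hKu : IsUnit K.det := isUnit_iff_ne_zero.2 hK
  have hLu : IsUnit L.det := isUnit_iff_ne_zero.2 hL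
  have houter : ∀ (i j p q : Fin m), (A₂ ^ (i:ℕ) * (B21 * B12) * A₂ ^ (j:ℕ)) p q
      = K p i * L j q := by
    intro i j p q
    have hmid : ∀ u v, (B21 * B12) u v = c u * bb v := by
      intro u v
      rw [Matrix.mul_apply]
      simp [hB21e, hB12e]
    rw [Matrix.mul_apply]
    have hKe : K p i = ∑ u, (A₂ ^ (i:ℕ)) p u * c u := rfl
    have hLe : L j q = ∑ v, bb v * (A₂ ^ (j:ℕ)) v q := rfl
    have hLHS : ∀ x, (A₂ ^ (i:ℕ) * (B21 * B12)) p x * (A₂ ^ (j:ℕ)) x q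
        = ∑ u, (A₂ ^ (i:ℕ)) p u * c u * (bb x * (A₂ ^ (j:ℕ)) x q) := by
      intro x
      rw [Matrix.mul_apply, Finset.sum_mul]
      apply Finset.sum_congr rfl
      intro u _
      rw [hmid]
      ring
    rw [Finset.sum_congr rfl fun x _ => hLHS x, hKe, hLe, Finset.sum_mul_sum, Finset.sum_comm]
  have hword : ∀ i j : Fin m, A ^ (i:ℕ) * Y * X * A ^ (j:ℕ)
      = fromBlocks 0 0 0 (A₂ ^ (i:ℕ) * (B21 * B12) * A₂ ^ (j:ℕ)) := by
    intro i j
    rw [hY, hX, hAblocks, fromBlocks_diag_pow, fromBlocks_diag_pow,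
      Matrix.fromBlocks_multiply, Matrix.fromBlocks_multiply, Matrix.fromBlocks_multiply]
    simp [Matrix.mul_assoc]
  have hKey : ∀ Z : Matrix (Fin m) (Fin m) ℂ, fromBlocks 0 0 0 Z ∈ S := by
    intro Z
    set G := K⁻¹ * Z * L⁻¹ with hG
    have h1 : K * G = Z * L⁻¹ := by
      rw [hG, ← Matrix.mul_assoc, ← Matrix.mul_assoc, Matrix.mul_nonsing_inv _ hKu,
        Matrix.one_mul]
    have hZ : K * G * L = Z := by
      rw [h1, Matrix.mul_assoc, Matrix.nonsing_inv_mul _ hLu, Matrix.mul_one]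
    have hZrep : Z = ∑ i : Fin m, ∑ j : Fin m,
        G i j • (A₂ ^ (i:ℕ) * (B21 * B12) * A₂ ^ (j:ℕ)) := by
      ext p q
      rw [Matrix.sum_apply]
      simp only [Matrix.sum_apply, Matrix.smul_apply, smul_eq_mul, houter]
      conv_lhs => rw [← hZ]
      rw [Matrix.mul_apply]
      simp only [Matrix.mul_apply, Finset.sum_mul]
      rw [Finset.sum_comm]
      exact Finset.sum_congr rfl fun i _ => Finset.sum_congr rfl fun j _ => by ring
    have hsum : fromBlocks 0 0 0 Z
        = ∑ i : Fin m, ∑ j : Fin m, G i j • (A ^ (i:ℕ) * Y * X * A ^ (j:ℕ)) := by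
      simp only [hword]
      ext x y
      rw [Matrix.sum_apply]
      simp only [Matrix.sum_apply, Matrix.smul_apply, smul_eq_mul]
      cases x with
      | inl w =>
        cases y <;> simp [Matrix.fromBlocks]
      | inr p =>
        cases y with
        | inl w => simp [Matrix.fromBlocks]
        | inr q =>
          simp only [Matrix.fromBlocks, Matrix.of_apply, Sum.elim_inr]
          conv_lhs => rw [hZrep]
          rw [Matrix.sum_apply]
          simp [Matrix.sum_apply, Matrix.smul_apply, smul_eq_mul]
    rw [hsum]
    apply S.sum_mem
    intro i _
    apply S.sum_mem
    intro j _
    exact S.smul_mem (S.mul_mem (S.mul_mem (S.mul_mem (S.pow_mem hAS _) hYS) hXS)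
      (S.pow_mem hAS _)) _
  have hbbne : ∃ k0, bb k0 ≠ 0 := by
    by_contra h
    push_neg at h
    apply hL
    apply Matrix.det_eq_zero_of_row_eq_zero (⟨0, hm⟩ : Fin m)
    intro q
    show (bb ᵥ* A₂ ^ (0:ℕ)) q = 0
    rw [pow_zero, Matrix.vecMul_one]
    exact h q
  have hcne : ∃ k1, c k1 ≠ 0 := by
    by_contra h
    push_neg at h
    apply hK
    apply Matrix.det_eq_zero_of_column_eq_zero (⟨0, hm⟩ : Fin m)
    intro p
    show (A₂ ^ (0:ℕ) *ᵥ c) p = 0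
    rw [pow_zero, Matrix.one_mulVec]
    exact h p
  obtain ⟨k0, hk0⟩ := hbbne
  obtain ⟨k1, hk1⟩ := hcne
  have hUR : ∀ R : Matrix (Fin 1) (Fin m) ℂ, fromBlocks 0 R 0 0 ∈ S := by
    intro R
    set Z : Matrix (Fin m) (Fin m) ℂ :=
      Matrix.of fun u v => if u = k0 then (bb k0)⁻¹ * R 0 v else 0 with hZdef
    have hXZ : X * fromBlocks 0 0 0 Z = fromBlocks 0 (B12 * Z) 0 0 := by
      rw [hX, Matrix.fromBlocks_multiply]
      simp
    have hBZ : B12 * Z = R := by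
      ext w v
      have hw : w = 0 := Subsingleton.elim _ _
      subst hw
      rw [Matrix.mul_apply, Finset.sum_eq_single k0]
      · rw [hB12e, hZdef]
        simp only [Matrix.of_apply, if_pos rfl, if_true]
        rw [← mul_assoc, mul_inv_cancel₀ hk0, one_mul]
      · intro u _ hu
        rw [hZdef]
        simp [hu]
      · simp
    have : fromBlocks 0 R 0 0 = X * fromBlocks 0 0 0 Z := by rw [hXZ, hBZ]
    rw [this]
    exact S.mul_mem hXS (hKey Z)
  have hLL : ∀ C0 : Matrix (Fin m) (Fin 1) ℂ, fromBlocks 0 0 C0 0 ∈ S := by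
    intro C0
    set Z : Matrix (Fin m) (Fin m) ℂ :=
      Matrix.of fun u v => if v = k1 then C0 u 0 * (c k1)⁻¹ else 0 with hZdef
    have hZY : fromBlocks 0 0 0 Z * Y = fromBlocks 0 0 (Z * B21) 0 := by
      rw [hY, Matrix.fromBlocks_multiply]
      simp
    have hZB : Z * B21 = C0 := by
      ext u w
      have hw : w = 0 := Subsingleton.elim _ _
      subst hw
      rw [Matrix.mul_apply, Finset.sum_eq_single k1]
      · rw [hB21e, hZdef]
        simp only [Matrix.of_apply, if_pos rfl, if_true]
        rw [mul_assoc, inv_mul_cancel₀ hk1, mul_one]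
      · intro u' _ hu
        rw [hZdef]
        simp [hu]
      · simp
    have : fromBlocks 0 0 C0 0 = fromBlocks 0 0 0 Z * Y := by rw [hZY, hZB]
    rw [this]
    exact S.mul_mem (hKey Z) hYS
  -- conclude
  rw [eq_top_iff]
  intro M _
  have hM : M = (M (Sum.inl 0) (Sum.inl 0)) • P + fromBlocks 0 (M.toBlocks₁₂) 0 0
      + fromBlocks 0 0 (M.toBlocks₂₁) 0 + fromBlocks 0 0 0 (M.toBlocks₂₂) := by
    rw [hP]
    ext x y
    cases x with
    | inl w =>
      cases y with
      | inl w' =>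
        have hw : w = 0 := Subsingleton.elim _ _
        have hw' : w' = 0 := Subsingleton.elim _ _
        subst hw; subst hw'
        simp [Matrix.fromBlocks]
      | inr q =>
        have hw : w = 0 := Subsingleton.elim _ _
        subst hw
        simp [Matrix.fromBlocks, Matrix.toBlocks₁₂]
    | inr p =>
      cases y with
      | inl w' =>
        have hw' : w' = 0 := Subsingleton.elim _ _
        subst hw'
        simp [Matrix.fromBlocks, Matrix.toBlocks₂₁]
      | inr q =>
        simp [Matrix.fromBlocks, Matrix.toBlocks₂₂]
  rw [hM]
  exact S.add_mem (S.add_mem (S.add_mem (S.smul_mem hPS _) (hUR _)) (hLL _)) (hKey _)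

lemma charpoly_eval {m : ℕ} (M : Matrix (Fin m) (Fin m) ℂ) (x : ℂ) :
    (M.charpoly).eval x = (x • (1 : Matrix (Fin m) (Fin m) ℂ) - M).det := by
  rw [Matrix.charpoly]
  rw [show Polynomial.eval x (charmatrix M).det
      = ((charmatrix M).map (Polynomial.evalRingHom x)).det from
    RingHom.map_det (Polynomial.evalRingHom x) (charmatrix M)]
  congr 1
  ext i j
  rcases eq_or_ne i j with rfl | hij
  · simp [charmatrix_apply_eq, Matrix.one_apply]
  · simp [charmatrix_apply_ne _ _ _ hij, Matrix.one_apply_ne hij]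

/-- Burnside-type lemma: if `A(t)` is an analytic family of block-diagonal matrices
with `A(0) = λ^{−1}·diag(α, J_{n−1})`, `α = λ^n ≠ 1`, and `B(t)` is an analytic family
with `B(0) = λ^{−1}` times the block matrix with first-row tail `b` (`b_1 ≠ 0`),
lower-right block `J_{n−1}` and zero first-column tail, and if the derivative at 0 of
the bottom-left entry `t ↦ B(t)_{n,1}` is nonzero, then for all sufficiently small
`t ≠ 0` the matrices `A(t)` and `B(t)` generate the full matrix algebra `M_n(ℂ)`. -/
theorem stmt16 (n : ℕ) (hn : 2 ≤ n) (lam : ℂ) (hlam : lam ≠ 0) (halpha : lam ^ n ≠ 1)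
    (A B : ℂ → Matrix (Fin 1 ⊕ Fin (n - 1)) (Fin 1 ⊕ Fin (n - 1)) ℂ)
    (hAanalytic : ∀ i j, AnalyticAt ℂ (fun t => A t i j) 0)
    (hBanalytic : ∀ i j, AnalyticAt ℂ (fun t => B t i j) 0)
    (hAblock : ∀ᶠ t in nhds (0 : ℂ),
      (∀ j : Fin (n - 1), A t (Sum.inl 0) (Sum.inr j) = 0)
      ∧ (∀ i : Fin (n - 1), A t (Sum.inr i) (Sum.inl 0) = 0))
    (hA0 : A 0 = lam⁻¹ • Matrix.fromBlocks (Matrix.of fun _ _ => lam ^ n) 0 0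
      (Jmat (n - 1)))
    (b : Fin (n - 1) → ℂ) (hb : b ⟨0, by omega⟩ ≠ 0)
    (hB0 : B 0 = lam⁻¹ • Matrix.fromBlocks (Matrix.of fun _ _ => lam ^ n)
      (Matrix.of fun _ j => b j) 0 (Jmat (n - 1)))
    (hderiv : deriv (fun t => B t (Sum.inr (⟨n - 2, by omega⟩ : Fin (n - 1)))
      (Sum.inl 0)) 0 ≠ 0) :
    ∃ ε > (0 : ℝ), ∀ t : ℂ, t ≠ 0 → ‖t‖ < ε →
      Algebra.adjoin ℂ
        ({A t, B t} : Set (Matrix (Fin 1 ⊕ Fin (n - 1)) (Fin 1 ⊕ Fin (n - 1)) ℂ)) = ⊤ := by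
  have hm : 0 < n - 1 := by omega
  -- scaled families
  set A₂f : ℂ → Matrix (Fin (n-1)) (Fin (n-1)) ℂ := fun t => (lam • A t).toBlocks₂₂ with hA₂f
  set af : ℂ → ℂ := fun t => (lam • A t) (Sum.inl 0) (Sum.inl 0) with haf
  set df : Fin (n-1) → ℂ → ℂ :=
    fun q => dslope (fun s => (lam • B s) (Sum.inr q) (Sum.inl 0)) 0 with hdf
  set bf : ℂ → Fin (n-1) → ℂ := fun t k => (lam • B t) (Sum.inl 0) (Sum.inr k) with hbf
  -- continuity facts
  have hA₂cont : ContinuousAt A₂f 0 := by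
    refine continuousAt_pi.2 ?_
    intro p
    refine continuousAt_pi.2 ?_
    intro q
    show ContinuousAt (fun y => lam • (A y (Sum.inr p) (Sum.inr q))) 0
    exact ((hAanalytic (Sum.inr p) (Sum.inr q)).continuousAt).const_smul lam
  have hacont : ContinuousAt af 0 := by
    show ContinuousAt (fun y => lam • (A y (Sum.inl 0) (Sum.inl 0))) 0
    exact ((hAanalytic (Sum.inl 0) (Sum.inl 0)).continuousAt).const_smul lam
  have hdiffB : ∀ q : Fin (n-1),
      DifferentiableAt ℂ (fun s => (lam • B s) (Sum.inr q) (Sum.inl 0)) 0 := by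
    intro q
    show DifferentiableAt ℂ (fun s => lam • (B s (Sum.inr q) (Sum.inl 0))) 0
    exact ((hBanalytic (Sum.inr q) (Sum.inl 0)).differentiableAt).const_smul lam
  have hdcont : ∀ q : Fin (n-1), ContinuousAt (df q) 0 := fun q =>
    continuousAt_dslope_same.2 (hdiffB q)
  have hbcont : ∀ k : Fin (n-1), ContinuousAt (fun t => bf t k) 0 := by
    intro k
    show ContinuousAt (fun y => lam • (B y (Sum.inl 0) (Sum.inr k))) 0
    exact ((hBanalytic (Sum.inl 0) (Sum.inr k)).continuousAt).const_smul lam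
  have hA₂powcont : ∀ i : ℕ, ContinuousAt (fun t => A₂f t ^ i) 0 := fun i =>
    hA₂cont.pow i
  -- values at 0
  have hsmul_entry : ∀ (M : Matrix (Fin 1 ⊕ Fin (n-1)) (Fin 1 ⊕ Fin (n-1)) ℂ) x y,
      lam • ((lam⁻¹ • M) x y) = M x y := by
    intro M x y
    show lam • (lam⁻¹ • M x y) = M x y
    rw [smul_eq_mul, smul_eq_mul, ← mul_assoc, mul_inv_cancel₀ hlam, one_mul]
  have hA₂0 : A₂f 0 = Jmat (n-1) := by
    ext p q
    show lam • ((A 0) (Sum.inr p) (Sum.inr q)) = Jmat (n-1) p q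
    rw [hA0, hsmul_entry]
    rfl
  have ha0 : af 0 = lam ^ n := by
    show lam • ((A 0) (Sum.inl 0) (Sum.inl 0)) = lam ^ n
    rw [hA0, hsmul_entry]
    rfl
  have hb0 : ∀ k, bf 0 k = b k := by
    intro k
    show lam • ((B 0) (Sum.inl 0) (Sum.inr k)) = b k
    rw [hB0, hsmul_entry]
    rfl
  have hc0 : ∀ q : Fin (n-1), (lam • B 0) (Sum.inr q) (Sum.inl 0) = 0 := by
    intro q
    show lam • ((B 0) (Sum.inr q) (Sum.inl 0)) = 0
    rw [hB0, hsmul_entry]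
    rfl
  have hd0 : df ⟨n - 2, by omega⟩ 0 ≠ 0 := by
    rw [hdf]
    simp only [dslope_same]
    have heq : (fun s => (lam • B s) (Sum.inr (⟨n-2, by omega⟩ : Fin (n-1))) (Sum.inl 0))
        = fun s => lam * B s (Sum.inr (⟨n - 2, by omega⟩ : Fin (n-1))) (Sum.inl 0) := rfl
    rw [heq, deriv_const_mul _ ((hBanalytic _ _).differentiableAt)]
    exact mul_ne_zero hlam hderiv
  -- eventual conditions
  have E2 : ∀ᶠ t in nhds (0:ℂ),
      ((af t) • (1 : Matrix (Fin (n-1)) (Fin (n-1)) ℂ) - A₂f t).det ≠ 0 := by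
    have hcont : ContinuousAt
        (fun t => ((af t) • (1 : Matrix (Fin (n-1)) (Fin (n-1)) ℂ) - A₂f t).det) 0 :=
      ContinuousAt.comp (Continuous.matrix_det continuous_id).continuousAt
        ((hacont.smul continuousAt_const).sub hA₂cont)
    apply hcont.eventually_ne
    rw [ha0, hA₂0]
    have htri : ((lam ^ n) • (1 : Matrix (Fin (n-1)) (Fin (n-1)) ℂ)
        - Jmat (n-1)).BlockTriangular id := by
      intro p q hpq
      have h1 : (1 : Matrix (Fin (n-1)) (Fin (n-1)) ℂ) p q = 0 :=
        Matrix.one_apply_ne (by rintro rfl; exact lt_irrefl _ hpq)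
      have h2 : Jmat (n-1) p q = 0 := Jmat_blockTriangular (n-1) hpq
      simp [Matrix.sub_apply, h1, h2]
    rw [Matrix.det_of_upperTriangular htri]
    have hdiag : ∀ p : Fin (n-1), ((lam ^ n) • (1 : Matrix (Fin (n-1)) (Fin (n-1)) ℂ)
        - Jmat (n-1)) p p = lam ^ n - 1 := by
      intro p
      have hN : Nmat (n-1) p p = 0 := by
        simp [Nmat]
      simp [Matrix.sub_apply, Jmat, Matrix.one_apply, hN]
    rw [Finset.prod_congr rfl (fun p _ => hdiag p)]
    simp only [Finset.prod_const, Finset.card_univ, Fintype.card_fin]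
    exact pow_ne_zero _ (sub_ne_zero.2 halpha)
  set Ktf : ℂ → Matrix (Fin (n-1)) (Fin (n-1)) ℂ :=
    fun t => Matrix.of fun p i => ((A₂f t ^ (i:ℕ)) *ᵥ (fun q => df q t)) p with hKtf
  set Ltf : ℂ → Matrix (Fin (n-1)) (Fin (n-1)) ℂ :=
    fun t => Matrix.of fun j q => ((bf t) ᵥ* (A₂f t ^ (j:ℕ))) q with hLtf
  have hpowentry : ∀ (i : ℕ) (p u : Fin (n-1)),
      ContinuousAt (fun t => (A₂f t ^ i) p u) 0 := by
    intro i p u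
    exact continuousAt_pi.1 (continuousAt_pi.1 (hA₂powcont i) p) u
  have E3 : ∀ᶠ t in nhds (0:ℂ), (Ktf t).det ≠ 0 := by
    have hcont : ContinuousAt (fun t => (Ktf t).det) 0 := by
      apply ContinuousAt.comp (Continuous.matrix_det continuous_id).continuousAt
      refine continuousAt_pi.2 ?_
      intro p
      refine continuousAt_pi.2 ?_
      intro i
      show ContinuousAt (fun t => ∑ u, (A₂f t ^ (i:ℕ)) p u * df u t) 0
      exact tendsto_finset_sum _ fun u _ => (hpowentry (i:ℕ) p u).mul (hdcont u)
    apply hcont.eventually_ne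
    have h0 : Ktf 0 = Matrix.of fun p i : Fin (n-1) => ((Jmat (n-1) ^ (i:ℕ)) *ᵥ (fun q => df q 0)) p := by
      simp only [hKtf, hA₂0]
    rw [h0]
    apply det_krylov_col hm
    have hidx : (⟨n-1-1, by omega⟩ : Fin (n-1)) = ⟨n-2, by omega⟩ := by
      ext
      simp only []
      omega
    rw [hidx]
    exact hd0
  have E4 : ∀ᶠ t in nhds (0:ℂ), (Ltf t).det ≠ 0 := by
    have hcont : ContinuousAt (fun t => (Ltf t).det) 0 := by
      apply ContinuousAt.comp (Continuous.matrix_det continuous_id).continuousAt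
      refine continuousAt_pi.2 ?_
      intro j
      refine continuousAt_pi.2 ?_
      intro q
      show ContinuousAt (fun t => ∑ u, bf t u * (A₂f t ^ (j:ℕ)) u q) 0
      exact tendsto_finset_sum _ fun u _ => (hbcont u).mul (hpowentry (j:ℕ) u q)
    apply hcont.eventually_ne
    have h0 : Ltf 0 = Matrix.of fun j q : Fin (n-1) => (b ᵥ* (Jmat (n-1) ^ (j:ℕ))) q := by
      simp only [hLtf, hA₂0]
      have : bf 0 = b := funext hb0
      rw [this]
    rw [h0]
    exact det_krylov_row hm b hb
  -- extract ε
  have hall := hAblock.and (E2.and (E3.and E4))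
  rw [Metric.eventually_nhds_iff] at hall
  obtain ⟨ε, hε, hball⟩ := hall
  refine ⟨ε, hε, ?_⟩
  intro t ht htε
  obtain ⟨⟨hA12, hA21⟩, hE2, hE3, hE4⟩ :=
    hball (show dist t 0 < ε by rwa [Complex.dist_eq, sub_zero])
  -- per-t quantities
  have hct : ∀ q : Fin (n-1), (lam • B t) (Sum.inr q) (Sum.inl 0) = t * df q t := by
    intro q
    show (lam • B t) (Sum.inr q) (Sum.inl 0)
      = t * dslope (fun s => (lam • B s) (Sum.inr q) (Sum.inl 0)) 0 t
    rw [dslope_of_ne _ ht]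
    rw [slope_def_field]
    rw [show (lam • B 0) (Sum.inr q) (Sum.inl 0) = 0 from hc0 q]
    rw [sub_zero, sub_zero]
    field_simp
  have hcore := core hm (lam • A t) (lam • B t)
    (fun j => by show lam • (A t (Sum.inl 0) (Sum.inr j)) = 0; rw [hA12 j, smul_zero])
    (fun i => by show lam • (A t (Sum.inr i) (Sum.inl 0)) = 0; rw [hA21 i, smul_zero])
    (by rw [charpoly_eval]; exact hE2)
    (by
      have hKmat : (Matrix.of fun p i : Fin (n-1) =>
          (((lam • A t).toBlocks₂₂ ^ (i:ℕ)) *ᵥ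
            (fun q => (lam • B t) (Sum.inr q) (Sum.inl 0))) p) = t • Ktf t := by
        ext p i
        show ((A₂f t ^ (i:ℕ)) *ᵥ (fun q => (lam • B t) (Sum.inr q) (Sum.inl 0))) p
          = t * (Ktf t p i)
        rw [show (fun q => (lam • B t) (Sum.inr q) (Sum.inl 0))
          = (t • fun q => df q t) from funext hct]
        rw [Matrix.mulVec_smul]
        rfl
      rw [hKmat, Matrix.det_smul]
      exact mul_ne_zero (pow_ne_zero _ ht) hE3)
    (by exact hE4)
  have hsub : Algebra.adjoin ℂ ({lam • A t, lam • B t} :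
      Set (Matrix (Fin 1 ⊕ Fin (n-1)) (Fin 1 ⊕ Fin (n-1)) ℂ))
      ≤ Algebra.adjoin ℂ {A t, B t} := by
    apply Algebra.adjoin_le
    intro x hx
    rcases Set.mem_insert_iff.1 hx with rfl | hx
    · exact Subalgebra.smul_mem _ (Algebra.subset_adjoin (by simp)) lam
    · rw [Set.mem_singleton_iff] at hx
      subst hx
      exact Subalgebra.smul_mem _ (Algebra.subset_adjoin (by simp)) lam
  exact top_unique (hcore ▸ hsub)

end
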